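/- Let A be a Hopf algebra over k with bijective antipode S, and let θ_ij, χ_i : A → k (i,j = 1,…,n) be k-linear maps satisfying θ_ij(ab) = Σ_k θ_ik(a)θ_kj(b), θ_ij(1) = δ_ij, and χ_i(ab) = Σ_j χ_j(a)θ_ji(b) + ε(a)χ_i(b) for all a, b ∈ A. Then the data ∂_i(a) = χ_i ⊳ a, σ_ij(a) = θ_ij ⊳ a, σ̄_ij(a) = (θ_ji ∘ S⁻¹) ⊳ a, σ̂_ij(a) = (θ_ij ∘ S⁻²) ⊳ a, where f ⊳ a = (id ⊗ f)(Δ(a)), define a free right twisted multi-derivation (∂, σ; σ̄, σ̂) on A. -/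

import Mathlib

/-!
# Statement 14

Let `A` be a Hopf algebra with bijective antipode `S` and let
`θ_ij, χ_i : A → k` satisfy `θ_ij(ab) = Σ_l θ_il(a)θ_lj(b)`, `θ_ij(1) = δ_ij`
and `χ_i(ab) = Σ_j χ_j(a)θ_ji(b) + ε(a)χ_i(b)`.  Then
`∂_i(a) = χ_i ⊳ a`, `σ_ij(a) = θ_ij ⊳ a`, `σ̄_ij(a) = (θ_ji ∘ S⁻¹) ⊳ a`,
`σ̂_ij(a) = (θ_ij ∘ S⁻²) ⊳ a` define a free right twisted multi-derivation
`(∂, σ; σ̄, σ̂)` on `A`, where `f ⊳ a = (id ⊗ f)(Δ a)`.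
-/

open TensorProduct

namespace Stmt14

open Coalgebra

variable {k A : Type*} [Field k] [Ring A] [HopfAlgebra k A] {n : ℕ}

/-- The left action `f ⊳ a = (id ⊗ f)(Δ a)` of a functional `f : A → k` on `A`. -/
noncomputable def hit (f : A →ₗ[k] k) : A →ₗ[k] A :=
  (TensorProduct.rid k A).toLinearMap ∘ₗ (LinearMap.lTensor A f) ∘ₗ Coalgebra.comul

set_option linter.unusedSectionVars false

lemma hit_apply (f : A →ₗ[k] k) {a : A} {ι : Type*} (r : Coalgebra.Repr k a ι) :
    hit f a = ∑ i ∈ r.index, f (r.right i) • r.left i := by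
  simp only [hit, LinearMap.coe_comp, Function.comp_apply, LinearEquiv.coe_coe, ← r.eq,
    map_sum, LinearMap.lTensor_tmul, TensorProduct.rid_tmul]

lemma hit_counit (a : A) : hit (Coalgebra.counit (R := k)) a = a := by
  simp only [hit, LinearMap.coe_comp, Function.comp_apply, LinearEquiv.coe_coe,
    Coalgebra.lTensor_counit_comul, TensorProduct.rid_tmul, one_smul]

lemma counit_left_smul {a : A} {ι : Type*} (r : Coalgebra.Repr k a ι) :
    ∑ i ∈ r.index, Coalgebra.counit (R := k) (r.left i) • r.right i = a := by
  have := congrArg (TensorProduct.lid k A) (Coalgebra.sum_counit_tmul_eq r)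
  simp only [map_sum, TensorProduct.lid_tmul, one_smul] at this
  exact this

lemma counit_right_smul {a : A} {ι : Type*} (r : Coalgebra.Repr k a ι) :
    ∑ i ∈ r.index, Coalgebra.counit (R := k) (r.right i) • r.left i = a := by
  have := congrArg (TensorProduct.rid k A) (Coalgebra.sum_tmul_counit_eq r)
  simp only [map_sum, TensorProduct.rid_tmul, one_smul] at this
  exact this

/-- repr of a product -/
noncomputable def mulRepr {a b : A} {ι κ : Type*} (ra : Coalgebra.Repr k a ι) (rb : Coalgebra.Repr k b κ) :
    Coalgebra.Repr k (a * b) (ι × κ) where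
  index := ra.index ×ˢ rb.index
  left p := ra.left p.1 * rb.left p.2
  right p := ra.right p.1 * rb.right p.2
  eq := by
    rw [Bialgebra.comul_mul, ← ra.eq, ← rb.eq, Finset.sum_mul_sum, Finset.sum_product]
    simp [Algebra.TensorProduct.tmul_mul_tmul]

/-- repr of 1 -/
noncomputable def oneRepr : Coalgebra.Repr k (1 : A) Unit where
  index := (Finset.univ : Finset Unit)
  left _ := 1
  right _ := 1
  eq := by simp [← Algebra.TensorProduct.one_def]

lemma hit_one (f : A →ₗ[k] k) : hit f (1 : A) = f 1 • 1 := by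
  rw [hit_apply f (oneRepr (k := k) (A := A))]
  simp [oneRepr]

/-- convolution of two functionals -/
noncomputable def conv (f g : A →ₗ[k] k) : A →ₗ[k] k :=
  (LinearMap.mul' k k) ∘ₗ (TensorProduct.map f g) ∘ₗ Coalgebra.comul

lemma conv_apply (f g : A →ₗ[k] k) {a : A} {ι : Type*} (r : Coalgebra.Repr k a ι) :
    conv f g a = ∑ i ∈ r.index, f (r.left i) * g (r.right i) := by
  simp only [conv, LinearMap.coe_comp, Function.comp_apply, ← r.eq, map_sum,
    TensorProduct.map_tmul, LinearMap.mul'_apply]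

lemma hit_hit (f g : A →ₗ[k] k) (a : A) : hit f (hit g a) = hit (conv f g) a := by
  classical
  set r := ℛ k a with hr
  let la := fun i : r.ι => ℛ k (r.left i)
  let rr := fun i : r.ι => ℛ k (r.right i)
  have key := Coalgebra.sum_tmul_tmul_eq r la rr
  have := congrArg ((TensorProduct.rid k A).toLinearMap ∘ₗ
    LinearMap.lTensor A ((LinearMap.mul' k k) ∘ₗ TensorProduct.map f g)) key
  simp only [map_sum, LinearMap.coe_comp, Function.comp_apply, LinearEquiv.coe_coe,
    LinearMap.lTensor_tmul, TensorProduct.map_tmul, LinearMap.mul'_apply,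
    TensorProduct.rid_tmul] at this
  calc hit f (hit g a)
      = ∑ i ∈ r.index, ∑ j ∈ (la i).index,
          (f ((la i).right j) * g (r.right i)) • (la i).left j := by
        rw [hit_apply g r, map_sum]
        refine Finset.sum_congr rfl fun i _ => ?_
        rw [map_smul, hit_apply f (la i), Finset.smul_sum]
        refine Finset.sum_congr rfl fun j _ => ?_
        rw [smul_smul, mul_comm]
    _ = ∑ i ∈ r.index, ∑ j ∈ (rr i).index,
          (f ((rr i).left j) * g ((rr i).right j)) • r.left i := this
    _ = hit (conv f g) a := by
        rw [hit_apply (conv f g) r]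
        refine Finset.sum_congr rfl fun i _ => ?_
        rw [conv_apply f g (rr i), Finset.sum_smul]

lemma hit_sum {ι : Type*} (s : Finset ι) (F : ι → (A →ₗ[k] k)) (a : A) :
    ∑ l ∈ s, hit (F l) a = hit (∑ l ∈ s, F l) a := by
  classical
  set r := ℛ k a
  simp only [hit_apply _ r, LinearMap.coe_sum, Finset.sum_apply, Finset.sum_smul]
  rw [Finset.sum_comm]

lemma hit_zero (a : A) : hit (0 : A →ₗ[k] k) a = 0 := by
  rw [hit_apply 0 (ℛ k a)]; simp


-- generic multiplicativity transfer
lemma hit_mul_of_rule {ι : Type*} (s : Finset ι) (f : A →ₗ[k] k) (g h : ι → (A →ₗ[k] k))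
    (hf : ∀ x y : A, f (x * y) = ∑ l ∈ s, g l x * h l y) (a b : A) :
    hit f (a * b) = ∑ l ∈ s, hit (g l) a * hit (h l) b := by
  classical
  set ra := ℛ k a
  set rb := ℛ k b
  rw [hit_apply f (mulRepr ra rb)]
  simp only [mulRepr, Finset.sum_product]
  calc ∑ i ∈ ra.index, ∑ j ∈ rb.index,
        f (ra.right i * rb.right j) • (ra.left i * rb.left j)
      = ∑ l ∈ s, ∑ i ∈ ra.index, ∑ j ∈ rb.index,
          (g l (ra.right i) • ra.left i) * (h l (rb.right j) • rb.left j) := by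
        rw [Finset.sum_comm (s := s)]
        refine Finset.sum_congr rfl fun i _ => ?_
        rw [Finset.sum_comm (s := s)]
        refine Finset.sum_congr rfl fun j _ => ?_
        rw [hf, Finset.sum_smul]
        refine Finset.sum_congr rfl fun l _ => ?_
        rw [smul_mul_smul_comm]
    _ = ∑ l ∈ s, hit (g l) a * hit (h l) b := by
        refine Finset.sum_congr rfl fun l _ => ?_
        rw [hit_apply (g l) ra, hit_apply (h l) rb, Finset.sum_mul_sum]

lemma antipode_one' : HopfAlgebra.antipode (R := k) (1 : A) = 1 := by
  have := HopfAlgebra.sum_mul_antipode_eq_algebraMap_counit (R := k) (oneRepr (k := k) (A := A))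
  simpa [oneRepr] using this

local notation "S" => HopfAlgebra.antipode (R := k) (A := A)




lemma claim1 {u v : A} {ι κ : Type*} (ru : Coalgebra.Repr k u ι) (rv : Coalgebra.Repr k v κ) :
    ∑ p ∈ ru.index, ∑ q ∈ rv.index,
      S (ru.left p * rv.left q) * (ru.right p * rv.right q)
    = (Coalgebra.counit (R := k) u * Coalgebra.counit (R := k) v) • (1 : A) := by
  have := HopfAlgebra.sum_antipode_mul_eq_smul (R := k) (mulRepr ru rv)
  simpa [mulRepr, Finset.sum_product, Bialgebra.counit_mul] using this

lemma antipode_mul' (a b : A) :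
    HopfAlgebra.antipode (R := k) (a * b) =
      HopfAlgebra.antipode (R := k) b * HopfAlgebra.antipode (R := k) a := by
  classical
  set ra := ℛ k a with hra
  set rb := ℛ k b with hrb
  let la := fun i : ra.ι => ℛ k (ra.left i)
  let ra' := fun i : ra.ι => ℛ k (ra.right i)
  let lb := fun j : rb.ι => ℛ k (rb.left j)
  let rb' := fun j : rb.ι => ℛ k (rb.right j)
  set Y := ∑ i ∈ ra.index, ∑ j ∈ rb.index, ∑ p ∈ (la i).index, ∑ q ∈ (lb j).index,
      S ((la i).left p * (lb j).left q) *
        (((la i).right p * (lb j).right q) * (S (rb.right j) * S (ra.right i))) with hY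
  have claimA : Y = S b * S a := by
    calc Y = ∑ i ∈ ra.index, ∑ j ∈ rb.index,
        (Coalgebra.counit (R := k) (ra.left i) * Coalgebra.counit (R := k) (rb.left j)) •
          (S (rb.right j) * S (ra.right i)) := by
          rw [hY]
          refine Finset.sum_congr rfl fun i _ => Finset.sum_congr rfl fun j _ => ?_
          have h1 : ∑ p ∈ (la i).index, ∑ q ∈ (lb j).index,
              S ((la i).left p * (lb j).left q) *
                (((la i).right p * (lb j).right q) * (S (rb.right j) * S (ra.right i)))
            = (∑ p ∈ (la i).index, ∑ q ∈ (lb j).index,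
                S ((la i).left p * (lb j).left q) *
                  ((la i).right p * (lb j).right q)) * (S (rb.right j) * S (ra.right i)) := by
            rw [Finset.sum_mul]
            refine Finset.sum_congr rfl fun p _ => ?_
            rw [Finset.sum_mul]
            exact Finset.sum_congr rfl fun q _ => (mul_assoc _ _ _).symm
          rw [h1, claim1 (la i) (lb j), smul_mul_assoc, one_mul]
      _ = S b * S a := by
          have hb : (S b : A) = ∑ j ∈ rb.index,
              Coalgebra.counit (R := k) (rb.left j) • S (rb.right j) := by
            conv_lhs => rw [← counit_left_smul rb]
            rw [map_sum]
            exact Finset.sum_congr rfl fun j _ => by rw [map_smul]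
          have ha : (S a : A) = ∑ i ∈ ra.index,
              Coalgebra.counit (R := k) (ra.left i) • S (ra.right i) := by
            conv_lhs => rw [← counit_left_smul ra]
            rw [map_sum]
            exact Finset.sum_congr rfl fun i _ => by rw [map_smul]
          rw [hb, ha, Finset.sum_mul]
          refine Finset.sum_comm.trans ?_
          refine Finset.sum_congr rfl fun j _ => ?_
          rw [Finset.mul_sum]
          refine Finset.sum_congr rfl fun i _ => ?_
          rw [smul_mul_smul_comm, mul_comm (Coalgebra.counit (R := k) (rb.left j))]
  have claimB : Y = S (a * b) := by
    have step1 : ∀ (i : ra.ι) (p : (la i).ι),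
        ∑ j ∈ rb.index, ∑ q ∈ (lb j).index,
          S ((la i).left p * (lb j).left q) *
            (((la i).right p * (lb j).right q) * (S (rb.right j) * S (ra.right i)))
        = S ((la i).left p * b) * ((la i).right p * S (ra.right i)) := by
      intro i p
      set α := (la i).left p
      set β := (la i).right p
      set γ := S (ra.right i) with hγ
      let Ψ : A ⊗[k] (A ⊗[k] A) →ₗ[k] A :=
        (LinearMap.mul' k A) ∘ₗ TensorProduct.map
          ((HopfAlgebra.antipode (R := k)) ∘ₗ LinearMap.mulLeft k α)
          ((LinearMap.mul' k A) ∘ₗ TensorProduct.map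
            (LinearMap.mulLeft k β)
            ((LinearMap.mulRight k γ) ∘ₗ (HopfAlgebra.antipode (R := k))))
      have key := congrArg Ψ (Coalgebra.sum_tmul_tmul_eq rb lb rb')
      simp only [Ψ, map_sum, LinearMap.coe_comp, Function.comp_apply,
        TensorProduct.map_tmul, LinearMap.mul'_apply, LinearMap.mulLeft_apply,
        LinearMap.mulRight_apply] at key
      refine key.trans ?_
      calc ∑ j ∈ rb.index, ∑ q ∈ (rb' j).index,
            S (α * rb.left j) * (β * (rb' j).left q * (S ((rb' j).right q) * γ))
          = ∑ j ∈ rb.index,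
              Coalgebra.counit (R := k) (rb.right j) • (S (α * rb.left j) * (β * γ)) := by
            refine Finset.sum_congr rfl fun j _ => ?_
            rw [← Finset.mul_sum]
            have : ∑ q ∈ (rb' j).index,
                β * (rb' j).left q * (S ((rb' j).right q) * γ)
              = β * ((∑ q ∈ (rb' j).index, (rb' j).left q * S ((rb' j).right q)) * γ) := by
              rw [Finset.sum_mul, Finset.mul_sum]
              exact Finset.sum_congr rfl fun q _ => by
                simp only [mul_assoc]
            rw [this, HopfAlgebra.sum_mul_antipode_eq_smul (rb' j), smul_mul_assoc,
              one_mul, mul_smul_comm, mul_smul_comm]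
        _ = S (α * b) * (β * γ) := by
            have hb2 : ∑ j ∈ rb.index,
                Coalgebra.counit (R := k) (rb.right j) • S (α * rb.left j)
                = S (α * b) := by
              have hcr := counit_right_smul rb
              calc ∑ j ∈ rb.index,
                    Coalgebra.counit (R := k) (rb.right j) • S (α * rb.left j)
                  = S (α * ∑ j ∈ rb.index,
                      Coalgebra.counit (R := k) (rb.right j) • rb.left j) := by
                    rw [Finset.mul_sum, map_sum]
                    exact Finset.sum_congr rfl fun j _ => by
                      rw [mul_smul_comm, map_smul]
                _ = S (α * b) := by rw [hcr]
            rw [← hb2, Finset.sum_mul]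
            exact Finset.sum_congr rfl fun j _ => by rw [smul_mul_assoc]
    have hY2 : Y = ∑ i ∈ ra.index, ∑ p ∈ (la i).index,
        S ((la i).left p * b) * ((la i).right p * S (ra.right i)) := by
      rw [hY]
      refine Finset.sum_congr rfl fun i _ => ?_
      rw [Finset.sum_comm]
      exact Finset.sum_congr rfl fun p _ => step1 i p
    let Φ : A ⊗[k] (A ⊗[k] A) →ₗ[k] A :=
      (LinearMap.mul' k A) ∘ₗ TensorProduct.map
        ((HopfAlgebra.antipode (R := k)) ∘ₗ LinearMap.mulRight k b)
        ((LinearMap.mul' k A) ∘ₗ TensorProduct.map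
          (LinearMap.id) (HopfAlgebra.antipode (R := k)))
    have key2 := congrArg Φ (Coalgebra.sum_tmul_tmul_eq ra la ra')
    simp only [Φ, map_sum, LinearMap.coe_comp, Function.comp_apply,
      TensorProduct.map_tmul, LinearMap.mul'_apply, LinearMap.mulRight_apply,
      LinearMap.id_coe, id_eq] at key2
    rw [hY2]
    refine key2.trans ?_
    calc ∑ i ∈ ra.index, ∑ p ∈ (ra' i).index,
          S (ra.left i * b) * ((ra' i).left p * S ((ra' i).right p))
        = ∑ i ∈ ra.index,
            Coalgebra.counit (R := k) (ra.right i) • S (ra.left i * b) := by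
          refine Finset.sum_congr rfl fun i _ => ?_
          rw [← Finset.mul_sum, HopfAlgebra.sum_mul_antipode_eq_smul (ra' i),
            mul_smul_comm, mul_one]
      _ = S (a * b) := by
          have hca := counit_right_smul ra
          calc ∑ i ∈ ra.index,
                Coalgebra.counit (R := k) (ra.right i) • S (ra.left i * b)
              = S ((∑ i ∈ ra.index,
                  Coalgebra.counit (R := k) (ra.right i) • ra.left i) * b) := by
                rw [Finset.sum_mul, map_sum]
                exact Finset.sum_congr rfl fun i _ => by
                  rw [smul_mul_assoc, map_smul]
            _ = S (a * b) := by rw [hca]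
  rw [claimB.symm.trans claimA]


section Sinv

variable (S' : A →ₗ[k] A)
  (hS'l : ∀ a, S' (HopfAlgebra.antipode (R := k) a) = a)
  (hS'r : ∀ a, HopfAlgebra.antipode (R := k) (S' a) = a)

include hS'l hS'r

lemma S'_one : S' (1 : A) = 1 := by
  conv_lhs => rw [← antipode_one' (k := k) (A := A)]
  rw [hS'l]

lemma S'_mul (a b : A) : S' (a * b) = S' b * S' a := by
  have h : a * b = HopfAlgebra.antipode (R := k) (S' b * S' a) := by
    rw [antipode_mul', hS'r, hS'r]
  rw [h, hS'l]

lemma antipode_injective : Function.Injective (HopfAlgebra.antipode (R := k) (A := A)) :=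
  fun x y h => by rw [← hS'l x, h, hS'l]

lemma sum_right_mul_S'_left {a : A} {ι : Type*} (r : Coalgebra.Repr k a ι) :
    ∑ i ∈ r.index, r.right i * S' (r.left i)
      = Coalgebra.counit (R := k) a • (1 : A) := by
  apply antipode_injective S' hS'l hS'r
  rw [map_sum, map_smul, antipode_one']
  calc ∑ i ∈ r.index, HopfAlgebra.antipode (R := k) (r.right i * S' (r.left i))
      = ∑ i ∈ r.index, r.left i * HopfAlgebra.antipode (R := k) (r.right i) := by
        refine Finset.sum_congr rfl fun i _ => ?_
        rw [antipode_mul', hS'r]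
    _ = Coalgebra.counit (R := k) a • (1 : A) :=
        HopfAlgebra.sum_mul_antipode_eq_smul r

lemma sum_S'_right_mul_left {a : A} {ι : Type*} (r : Coalgebra.Repr k a ι) :
    ∑ i ∈ r.index, S' (r.right i) * r.left i
      = Coalgebra.counit (R := k) a • (1 : A) := by
  apply antipode_injective S' hS'l hS'r
  rw [map_sum, map_smul, antipode_one']
  calc ∑ i ∈ r.index, HopfAlgebra.antipode (R := k) (S' (r.right i) * r.left i)
      = ∑ i ∈ r.index, HopfAlgebra.antipode (R := k) (r.left i) * r.right i := by
        refine Finset.sum_congr rfl fun i _ => ?_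
        rw [antipode_mul', hS'r]
    _ = Coalgebra.counit (R := k) a • (1 : A) :=
        HopfAlgebra.sum_antipode_mul_eq_smul r

end Sinv

/-- builder for algebra maps into matrices -/
noncomputable def matHom (F : Fin n → Fin n → (A →ₗ[k] A))
    (h1 : ∀ i j, F i j 1 = if i = j then (1 : A) else 0)
    (hm : ∀ (i j : Fin n) (a b : A), F i j (a * b) = ∑ l, F i l a * F l j b) :
    A →ₐ[k] Matrix (Fin n) (Fin n) A :=
  AlgHom.ofLinearMap
    { toFun := fun a => Matrix.of fun i j => F i j a
      map_add' := fun a b => by ext i j; simp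
      map_smul' := fun c a => by ext i j; simp }
    (by ext i j; simp [Matrix.one_apply, h1])
    (fun a b => by ext i j; simp [Matrix.mul_apply, hm])

lemma matHom_apply (F : Fin n → Fin n → (A →ₗ[k] A)) (h1) (hm) (a : A) (i j : Fin n) :
    matHom F h1 hm a i j = F i j a := rfl



/--
Given Hopf-algebraic data `(θ_ij, χ_i)` as above, the maps
`∂_i = χ_i ⊳ -`, `σ_ij = θ_ij ⊳ -`, `σ̄_ij = (θ_ji ∘ S⁻¹) ⊳ -` and
`σ̂_ij = (θ_ij ∘ S⁻²) ⊳ -` constitute a free right twisted multi-derivation on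
`A`: `σ`, `σ̄`, `σ̂` are algebra maps `A → M_n(A)`, `∂` satisfies the twisted
Leibniz rule, and `σ̄ • σᵀ = σᵀ • σ̄ = 𝕀`, `σ̂ • σ̄ᵀ = σ̄ᵀ • σ̂ = 𝕀`.
-/
theorem free_twisted_multiderivation_of_hopf_data
    (S' : A →ₗ[k] A)
    (hS'l : ∀ a, S' (HopfAlgebra.antipode (R := k) a) = a)
    (hS'r : ∀ a, HopfAlgebra.antipode (R := k) (S' a) = a)
    (θ : Fin n → Fin n → (A →ₗ[k] k)) (χ : Fin n → (A →ₗ[k] k))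
    (hθmul : ∀ (i j : Fin n) (a b : A),
      θ i j (a * b) = ∑ l, θ i l a * θ l j b)
    (hθone : ∀ i j : Fin n, θ i j 1 = if i = j then (1 : k) else 0)
    (hχ : ∀ (i : Fin n) (a b : A),
      χ i (a * b) = (∑ j, χ j a * θ j i b) + Coalgebra.counit a * χ i b) :
    -- the twisted Leibniz rule for `∂_i(a) = χ_i ⊳ a`:
    (∀ (i : Fin n) (a b : A),
      hit (χ i) (a * b)
        = (∑ j, hit (χ j) a * hit (θ j i) b) + a * hit (χ i) b) ∧
    -- `σ`, `σ̄` and `σ̂` are algebra maps `A → M_n(A)`: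
    (∃ σA σbarA σhatA : A →ₐ[k] Matrix (Fin n) (Fin n) A,
      (∀ (a : A) (i j : Fin n), σA a i j = hit (θ i j) a) ∧
      (∀ (a : A) (i j : Fin n), σbarA a i j = hit ((θ j i) ∘ₗ S') a) ∧
      (∀ (a : A) (i j : Fin n), σhatA a i j = hit ((θ i j) ∘ₗ S' ∘ₗ S') a)) ∧
    -- `σ̄ • σᵀ = 𝕀` and `σᵀ • σ̄ = 𝕀`:
    (∀ (i j : Fin n) (a : A),
      (∑ l, hit ((θ l i) ∘ₗ S') (hit (θ j l) a)) = if i = j then a else 0) ∧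
    (∀ (i j : Fin n) (a : A),
      (∑ l, hit (θ l i) (hit ((θ j l) ∘ₗ S') a)) = if i = j then a else 0) ∧
    -- `σ̂ • σ̄ᵀ = 𝕀` and `σ̄ᵀ • σ̂ = 𝕀`:
    (∀ (i j : Fin n) (a : A),
      (∑ l, hit ((θ i l) ∘ₗ S' ∘ₗ S') (hit ((θ l j) ∘ₗ S') a))
        = if i = j then a else 0) ∧
    (∀ (i j : Fin n) (a : A),
      (∑ l, hit ((θ i l) ∘ₗ S') (hit ((θ l j) ∘ₗ S' ∘ₗ S') a))
        = if i = j then a else 0) := by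
  classical
  have hS'one := S'_one S' hS'l hS'r
  have hS'mul := S'_mul S' hS'l hS'r
  -- a helper to finish each of the four inverse identities
  have finish : ∀ (f g : Fin n → (A →ₗ[k] k)) (i j : Fin n) (a : A),
      (∀ x : A, (∑ l, conv (f l) (g l)) x = if i = j then Coalgebra.counit (R := k) x else 0) →
      (∑ l, hit (f l) (hit (g l) a)) = if i = j then a else 0 := by
    intro f g i j a hfun
    calc ∑ l, hit (f l) (hit (g l) a)
        = ∑ l, hit (conv (f l) (g l)) a := by
          exact Finset.sum_congr rfl fun l _ => hit_hit (f l) (g l) a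
      _ = hit (∑ l, conv (f l) (g l)) a := hit_sum _ _ _
      _ = if i = j then a else 0 := by
          have : (∑ l, conv (f l) (g l))
              = (if i = j then Coalgebra.counit (R := k) (A := A) else 0) := by
            apply LinearMap.ext
            intro x
            rw [hfun x]
            split <;> simp
          rw [this]
          split
          · exact hit_counit a
          · exact hit_zero a
  refine ⟨?leib, ?alg, ?inv1, ?inv2, ?inv3, ?inv4⟩
  case leib =>
    intro i a b
    have rule : ∀ x y : A, (χ i) (x * y) =
        ∑ o : Option (Fin n), (fun o => Option.elim o (Coalgebra.counit (R := k)) χ) o x *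
          (fun o => Option.elim o (χ i) (fun j => θ j i)) o y := by
      intro x y
      rw [Fintype.sum_option]
      simp only [Option.elim]
      rw [hχ, add_comm]
    have := hit_mul_of_rule Finset.univ (χ i)
      (fun o => Option.elim o (Coalgebra.counit (R := k)) χ)
      (fun o => Option.elim o (χ i) (fun j => θ j i)) rule a b
    rw [this, Fintype.sum_option]
    simp only [Option.elim]
    rw [hit_counit, add_comm]
  case alg =>
    refine ⟨matHom (fun i j => hit (θ i j)) ?_ ?_,
            matHom (fun i j => hit ((θ j i) ∘ₗ S')) ?_ ?_,
            matHom (fun i j => hit ((θ i j) ∘ₗ S' ∘ₗ S')) ?_ ?_,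
            fun a i j => rfl, fun a i j => rfl, fun a i j => rfl⟩
    · intro i j
      rw [hit_one, hθone, ite_smul, one_smul, zero_smul]
    · intro i j a b
      exact hit_mul_of_rule Finset.univ (θ i j) (fun l => θ i l) (fun l => θ l j)
        (fun x y => hθmul i j x y) a b
    · intro i j
      rw [hit_one]
      simp only [LinearMap.comp_apply, hS'one, hθone]
      rcases eq_or_ne i j with h | h
      · subst h; simp
      · rw [if_neg (fun hji => h hji.symm), if_neg h, zero_smul]
    · intro i j a b
      refine hit_mul_of_rule Finset.univ ((θ j i) ∘ₗ S')
        (fun l => (θ l i) ∘ₗ S') (fun l => (θ j l) ∘ₗ S') (fun x y => ?_) a b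
      simp only [LinearMap.comp_apply]
      rw [hS'mul, hθmul]
      exact Finset.sum_congr rfl fun l _ => mul_comm _ _
    · intro i j
      rw [hit_one]
      simp only [LinearMap.comp_apply, hS'one, hθone]
      rw [ite_smul, one_smul, zero_smul]
    · intro i j a b
      refine hit_mul_of_rule Finset.univ ((θ i j) ∘ₗ S' ∘ₗ S')
        (fun l => (θ i l) ∘ₗ S' ∘ₗ S') (fun l => (θ l j) ∘ₗ S' ∘ₗ S') (fun x y => ?_) a b
      simp only [LinearMap.comp_apply]
      rw [hS'mul x y, hS'mul (S' y) (S' x), hθmul]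
  case inv1 =>
    intro i j a
    refine finish _ _ i j a fun x => ?_
    set r := ℛ k x
    calc (∑ l, conv ((θ l i) ∘ₗ S') (θ j l)) x
        = ∑ m ∈ r.index, ∑ l, θ j l (r.right m) * θ l i (S' (r.left m)) := by
          rw [LinearMap.sum_apply]
          simp only [conv_apply _ _ r, LinearMap.comp_apply]
          rw [Finset.sum_comm]
          exact Finset.sum_congr rfl fun m _ => Finset.sum_congr rfl fun l _ =>
            mul_comm _ _
      _ = ∑ m ∈ r.index, θ j i (r.right m * S' (r.left m)) := by
          exact Finset.sum_congr rfl fun m _ => (hθmul j i _ _).symm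
      _ = θ j i (Coalgebra.counit (R := k) x • (1 : A)) := by
          rw [← map_sum, sum_right_mul_S'_left S' hS'l hS'r r]
      _ = if i = j then Coalgebra.counit (R := k) x else 0 := by
          rw [map_smul, hθone, smul_eq_mul, mul_ite, mul_one, mul_zero]
          simp [eq_comm]
  case inv2 =>
    intro i j a
    refine finish _ _ i j a fun x => ?_
    set r := ℛ k x
    calc (∑ l, conv (θ l i) ((θ j l) ∘ₗ S')) x
        = ∑ m ∈ r.index, ∑ l, θ j l (S' (r.right m)) * θ l i (r.left m) := by
          rw [LinearMap.sum_apply]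
          simp only [conv_apply _ _ r, LinearMap.comp_apply]
          rw [Finset.sum_comm]
          exact Finset.sum_congr rfl fun m _ => Finset.sum_congr rfl fun l _ =>
            mul_comm _ _
      _ = ∑ m ∈ r.index, θ j i (S' (r.right m) * r.left m) := by
          exact Finset.sum_congr rfl fun m _ => (hθmul j i _ _).symm
      _ = θ j i (Coalgebra.counit (R := k) x • (1 : A)) := by
          rw [← map_sum, sum_S'_right_mul_left S' hS'l hS'r r]
      _ = if i = j then Coalgebra.counit (R := k) x else 0 := by
          rw [map_smul, hθone, smul_eq_mul, mul_ite, mul_one, mul_zero]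
          simp [eq_comm]
  case inv3 =>
    intro i j a
    refine finish _ _ i j a fun x => ?_
    set r := ℛ k x
    calc (∑ l, conv ((θ i l) ∘ₗ S' ∘ₗ S') ((θ l j) ∘ₗ S')) x
        = ∑ m ∈ r.index, ∑ l, θ i l (S' (S' (r.left m))) * θ l j (S' (r.right m)) := by
          rw [LinearMap.sum_apply]
          simp only [conv_apply _ _ r, LinearMap.comp_apply]
          rw [Finset.sum_comm]
      _ = ∑ m ∈ r.index, θ i j (S' (r.right m * S' (r.left m))) := by
          refine Finset.sum_congr rfl fun m _ => ?_
          rw [hS'mul (r.right m) (S' (r.left m)), ← hθmul]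
      _ = θ i j (S' (Coalgebra.counit (R := k) x • (1 : A))) := by
          rw [← map_sum, ← map_sum, sum_right_mul_S'_left S' hS'l hS'r r]
      _ = if i = j then Coalgebra.counit (R := k) x else 0 := by
          rw [map_smul, map_smul, hS'one, hθone, smul_eq_mul, mul_ite, mul_one, mul_zero]
  case inv4 =>
    intro i j a
    refine finish _ _ i j a fun x => ?_
    set r := ℛ k x
    calc (∑ l, conv ((θ i l) ∘ₗ S') ((θ l j) ∘ₗ S' ∘ₗ S')) x
        = ∑ m ∈ r.index, ∑ l, θ i l (S' (r.left m)) * θ l j (S' (S' (r.right m))) := by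
          rw [LinearMap.sum_apply]
          simp only [conv_apply _ _ r, LinearMap.comp_apply]
          rw [Finset.sum_comm]
      _ = ∑ m ∈ r.index, θ i j (S' (S' (r.right m) * r.left m)) := by
          refine Finset.sum_congr rfl fun m _ => ?_
          rw [hS'mul (S' (r.right m)) (r.left m), ← hθmul]
      _ = θ i j (S' (Coalgebra.counit (R := k) x • (1 : A))) := by
          rw [← map_sum, ← map_sum, sum_S'_right_mul_left S' hS'l hS'r r]
      _ = if i = j then Coalgebra.counit (R := k) x else 0 := by
          rw [map_smul, map_smul, hS'one, hθone, smul_eq_mul, mul_ite, mul_one, mul_zero]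


end Stmt14
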